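/- Let G be a nonempty finite abstract simplicial complex. The star topology on G is a connected topological space if and only if the comparability graph of G — the simple graph on vertex set G in which distinct x, y ∈ G are adjacent if and only if x ⊆ y or y ⊆ x — is a connected graph. -/

import Mathlib

variable {V : Type*} [DecidableEq V]

/-- The star `U(x)` of a simplex `x` inside the simplicial complex `G`. -/
def simplexStar (G : Finset (Finset V)) (x : Finset V) :
    Set {y : Finset V // y ∈ G} :=
  {y | x ⊆ y.1}

/-- The star topology on a finite abstract simplicial complex. -/
def starTopology (G : Finset (Finset V)) :
    TopologicalSpace {y : Finset V // y ∈ G} :=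
  TopologicalSpace.generateFrom {s | ∃ x ∈ G, s = simplexStar G x}

/-- The comparability graph of a simplicial complex: distinct simplices are
adjacent iff one is contained in the other. -/
def compGraph (G : Finset (Finset V)) : SimpleGraph {y : Finset V // y ∈ G} where
  Adj a b := a ≠ b ∧ (a.1 ⊆ b.1 ∨ b.1 ⊆ a.1)
  symm := ⟨fun a b h => ⟨h.1.symm, h.2.symm⟩⟩
  loopless := ⟨fun a h => h.1 rfl⟩

/-- Open sets in the star topology are upward closed. -/
lemma star_open_upward (G : Finset (Finset V)) {S : Set {y : Finset V // y ∈ G}}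
    (hS : @IsOpen _ (starTopology G) S) {a b : {y : Finset V // y ∈ G}}
    (hab : a.1 ⊆ b.1) (ha : a ∈ S) : b ∈ S := by
  induction hS with
  | basic s hs =>
      obtain ⟨x, _, rfl⟩ := hs
      exact Set.Subset.trans ha hab
  | univ => trivial
  | inter s t _ _ ihs iht => exact ⟨ihs ha.1, iht ha.2⟩
  | sUnion S _ ih =>
      obtain ⟨s, hsS, has⟩ := ha
      exact ⟨s, hsS, ih s hsS has⟩

lemma clopen_adj (G : Finset (Finset V)) {S : Set {y : Finset V // y ∈ G}}
    (hS : @IsClopen _ (starTopology G) S) {a b : {y : Finset V // y ∈ G}}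
    (hab : (compGraph G).Adj a b) (ha : a ∈ S) : b ∈ S := by
  rcases hab.2 with h | h
  · exact star_open_upward G hS.2 h ha
  · by_contra hb
    exact star_open_upward G hS.1.isOpen_compl h hb ha

lemma clopen_reachable (G : Finset (Finset V)) {S : Set {y : Finset V // y ∈ G}}
    (hS : @IsClopen _ (starTopology G) S) {a b : {y : Finset V // y ∈ G}}
    (hab : (compGraph G).Reachable a b) (ha : a ∈ S) : b ∈ S := by
  obtain ⟨w⟩ := hab
  induction w with
  | nil => exact ha
  | cons h _ ih => exact ih (clopen_adj G hS h ha)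

/-- The reachability component is open in the star topology. -/
lemma reach_open (G : Finset (Finset V)) (a : {y : Finset V // y ∈ G}) :
    @IsOpen _ (starTopology G) {b | (compGraph G).Reachable a b} := by
  letI := starTopology G
  have : {b | (compGraph G).Reachable a b} =
      ⋃ x ∈ {b | (compGraph G).Reachable a b}, simplexStar G x.1 := by
    ext b
    simp only [Set.mem_iUnion, Set.mem_setOf_eq, simplexStar]
    constructor
    · intro hb; exact ⟨b, hb, subset_rfl⟩
    · rintro ⟨x, hx, hxb⟩
      rcases eq_or_ne x b with rfl | hne
      · exact hx
      · exact hx.trans ⟨SimpleGraph.Walk.cons ⟨hne, Or.inl hxb⟩ SimpleGraph.Walk.nil⟩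
  rw [this]
  refine isOpen_biUnion fun x _ => ?_
  exact TopologicalSpace.GenerateOpen.basic _ ⟨x.1, x.2, rfl⟩

lemma reach_compl_open (G : Finset (Finset V)) (a : {y : Finset V // y ∈ G}) :
    @IsOpen _ (starTopology G) {b | (compGraph G).Reachable a b}ᶜ := by
  letI := starTopology G
  have : {b | (compGraph G).Reachable a b}ᶜ =
      ⋃ x ∈ {b | (compGraph G).Reachable a b}ᶜ, simplexStar G x.1 := by
    ext b
    simp only [Set.mem_iUnion, Set.mem_compl_iff, Set.mem_setOf_eq, simplexStar]
    constructor
    · intro hb; exact ⟨b, hb, subset_rfl⟩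
    · rintro ⟨x, hx, hxb⟩ hb
      rcases eq_or_ne x b with rfl | hne
      · exact hx hb
      · exact hx (hb.trans ⟨SimpleGraph.Walk.cons ⟨hne.symm, Or.inr hxb⟩ SimpleGraph.Walk.nil⟩)
  rw [this]
  refine isOpen_biUnion fun x _ => ?_
  exact TopologicalSpace.GenerateOpen.basic _ ⟨x.1, x.2, rfl⟩

/-- The star topology on a nonempty complex is connected iff the
comparability graph of the complex is connected. -/
theorem stmt6 (G : Finset (Finset V))
    (hG : G.Nonempty)
    (hne : ∀ x ∈ G, x.Nonempty)
    (hdown : ∀ x ∈ G, ∀ y ⊆ x, y.Nonempty → y ∈ G) :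
    @ConnectedSpace _ (starTopology G) ↔ (compGraph G).Connected := by
  letI := starTopology G
  obtain ⟨x0, hx0⟩ := hG
  have hnonempty : Nonempty {y : Finset V // y ∈ G} := ⟨⟨x0, hx0⟩⟩
  constructor
  · intro hc
    haveI := hnonempty
    refine ⟨fun a b => ?_⟩
    have hclopen : IsClopen {b | (compGraph G).Reachable a b} :=
      ⟨⟨(reach_compl_open G a)⟩, reach_open G a⟩
    have := hclopen.eq_univ ⟨a, SimpleGraph.Reachable.refl a⟩
    have hb : b ∈ Set.univ := Set.mem_univ b
    rw [← this] at hb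
    exact hb
  · intro hc
    haveI := hnonempty
    refine { toPreconnectedSpace := ⟨?_⟩, toNonempty := hnonempty }
    rintro u v hu hv hcov ⟨a, -, hau⟩ ⟨b, -, hbv⟩
    rcases Set.eq_empty_or_nonempty (u ∩ v) with hemp | hne'
    · exfalso
      have hcl : IsClosed u := by
        have : u = vᶜ := by
          apply Set.eq_of_subset_of_subset
          · intro z hz hzv; exact Set.eq_empty_iff_forall_notMem.1 hemp z ⟨hz, hzv⟩
          · intro z hz
            rcases hcov (Set.mem_univ z) with h | h
            · exact h
            · exact absurd h hz
        rw [this]; exact ⟨by rwa [compl_compl]⟩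
      exact (Set.eq_empty_iff_forall_notMem.1 hemp b)
        ⟨clopen_reachable G ⟨hcl, hu⟩ (hc.1 a b) hau, hbv⟩
    · obtain ⟨z, hz⟩ := hne'
      exact ⟨z, Set.mem_univ z, hz⟩
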